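/- For the hub-and-two-spoke walk on ℤ (K(x,x−sgn(x)) = a, K(x,x+sgn(x)) = b for x ≠ 0, K(0,1) = K(0,−1) = b/2, with 0 < b < 1/2, a = 1−b) and ρ = 2√(ab), the family σ_ξ(y) = ((1−ρ)/(2a))(1+|y|+ξy)(√(b/a))^{|y|} for y ≠ 0 and σ_ξ(0) = (1−ρ)/a, indexed by ξ ∈ [−1,1], satisfies: each σ_ξ is a probability measure on ℤ, and σ_ξ K = ρ σ_ξ. -/

import Mathlib

open Filter Topology

set_option maxHeartbeats 1000000

/-- For the hub-and-two-spoke walk on `ℤ`, each `σ_ξ`, `ξ ∈ [-1,1]`, is a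
`ρ`-invariant quasi-stationary distribution. -/
theorem hub_two_spoke_qsd_family
    (a b ρ : ℝ) (hb0 : 0 < b) (hb : b < 1 / 2) (ha : a = 1 - b)
    (hρ : ρ = 2 * Real.sqrt (a * b))
    (K : ℤ → ℤ → ℝ)
    (hK : ∀ x y : ℤ, K x y =
      if x = 0 then (if y = 1 ∨ y = -1 then b / 2 else 0)
      else if 0 < x then (if y = x + 1 then b else if y = x - 1 then a else 0)
      else (if y = x - 1 then b else if y = x + 1 then a else 0))
    (σ : ℝ → ℤ → ℝ)
    (hσ : ∀ ξ : ℝ, ∀ y : ℤ, σ ξ y =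
      if y = 0 then (1 - ρ) / a
      else (1 - ρ) / (2 * a) * (1 + (y.natAbs : ℝ) + ξ * (y : ℝ)) *
        Real.sqrt (b / a) ^ y.natAbs)
 :
    ∀ ξ ∈ Set.Icc (-1 : ℝ) 1,
      (∀ y : ℤ, 0 ≤ σ ξ y) ∧ (∑' y : ℤ, σ ξ y) = 1 ∧
        ∀ y : ℤ, ∑' z : ℤ, σ ξ z * K z y = ρ * σ ξ y := by
  intro ξ hξ
  obtain ⟨hξ1, hξ2⟩ := hξ
  have ha0 : 0 < a := by rw [ha]; linarith
  have hba : b < a := by rw [ha]; linarith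
  set s : ℝ := Real.sqrt (b / a) with hsdef
  have hs0 : 0 ≤ s := Real.sqrt_nonneg _
  have hs2 : s ^ 2 = b / a := Real.sq_sqrt (by positivity)
  have hb' : b = a * s ^ 2 := by rw [hs2]; field_simp
  have hρ' : ρ = 2 * (a * s) := by
    have hab : a * b = (a * s) ^ 2 := by
      rw [mul_pow, hs2]; field_simp
    rw [hρ, hab, Real.sqrt_sq (by positivity)]
  have hs1 : s < 1 := by
    have h1 : s ^ 2 < 1 := by rw [hs2]; exact (div_lt_one ha0).mpr hba
    nlinarith [sq_nonneg (s - 1)]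
  have h1ρ : 1 - ρ = a * (1 - s) ^ 2 := by
    rw [hρ']; linear_combination hb' - ha
  have h1ρ0 : 0 ≤ 1 - ρ := by rw [h1ρ]; positivity
  set c : ℝ := (1 - ρ) / (2 * a) with hcdef
  have hc0 : 0 ≤ c := by positivity
  have hceq : c = (1 - s) ^ 2 / 2 := by
    rw [hcdef, h1ρ]; field_simp
  -- nonnegativity
  have hnonneg : ∀ y : ℤ, 0 ≤ σ ξ y := by
    intro y
    rw [hσ]
    split_ifs with h0
    · positivity
    · have habs : |(y : ℝ)| = (y.natAbs : ℝ) := by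
        rw [← Int.cast_abs, ← Int.natCast_natAbs, Int.cast_natCast]
      have h1 : |ξ * (y : ℝ)| ≤ |(y : ℝ)| := by
        rw [abs_mul]
        exact mul_le_of_le_one_left (abs_nonneg _) (abs_le.mpr ⟨hξ1, hξ2⟩)
      have h2 : -(|(y : ℝ)|) ≤ ξ * (y : ℝ) := by
        have := neg_abs_le (ξ * (y : ℝ)); linarith
    
      have h3 : (0 : ℝ) ≤ 1 + (y.natAbs : ℝ) + ξ * (y : ℝ) := by
        rw [← habs]; have := abs_nonneg (y : ℝ); linarith
      have h4 : (0 : ℝ) ≤ c := hc0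
      have h5 : (0 : ℝ) ≤ s ^ y.natAbs := pow_nonneg hs0 _
      exact mul_nonneg (mul_nonneg h4 h3) h5
  refine ⟨hnonneg, ?_, ?_⟩
  · -- sum equals 1
    have hnorm : ‖s‖ < 1 := by rw [Real.norm_eq_abs, abs_of_nonneg hs0]; exact hs1
    have H1 : HasSum (fun n : ℕ => s ^ n) (1 - s)⁻¹ := hasSum_geometric_of_lt_one hs0 hs1
    have H2 : HasSum (fun n : ℕ => (n : ℝ) * s ^ n) (s / (1 - s) ^ 2) :=
      hasSum_coe_mul_geometric_of_norm_lt_one hnorm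
    have Hf : HasSum (fun n : ℕ => σ ξ (n : ℤ))
        (c * (1 - s)⁻¹ + c * (1 + ξ) * (s / (1 - s) ^ 2) + c) := by
      have heq : (fun n : ℕ => σ ξ (n : ℤ)) =
          fun n : ℕ => c * s ^ n + (c * (1 + ξ)) * ((n : ℝ) * s ^ n)
            + (if n = 0 then c else 0) := by
        funext n
        rw [hσ]
        rcases n with _ | m
        · rw [if_pos (by norm_num : ((0 : ℕ) : ℤ) = 0), if_pos rfl]
          rw [hcdef]
          push_cast
          field_simp
          ring
        · have h0 : ((m + 1 : ℕ) : ℤ) ≠ 0 := by exact_mod_cast Nat.succ_ne_zero m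
          rw [if_neg h0, if_neg (Nat.succ_ne_zero m)]
          simp only [Int.natAbs_natCast, Int.cast_natCast, add_zero,
            Nat.succ_eq_add_one, pow_succ]
          push_cast
          ring
      rw [heq]
      exact ((H1.mul_left c).add (H2.mul_left (c * (1 + ξ)))).add (hasSum_ite_eq 0 c)
    have Hg : HasSum (fun n : ℕ => σ ξ (Int.negSucc n))
        (c * s * (2 - ξ) * (1 - s)⁻¹ + c * s * (1 - ξ) * (s / (1 - s) ^ 2)) := by
      have heq : (fun n : ℕ => σ ξ (Int.negSucc n)) =
          fun n : ℕ => (c * s * (2 - ξ)) * s ^ n + (c * s * (1 - ξ)) * ((n : ℝ) * s ^ n) := by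
        funext n
        rw [hσ, if_neg (Int.negSucc_ne_zero n)]
        simp only [Int.natAbs_negSucc, Int.cast_negSucc, Nat.succ_eq_add_one, pow_succ]
        push_cast
        ring
      rw [heq]
      exact (H1.mul_left _).add (H2.mul_left _)
    have Htot : HasSum (σ ξ)
        ((c * (1 - s)⁻¹ + c * (1 + ξ) * (s / (1 - s) ^ 2) + c)
          + (c * s * (2 - ξ) * (1 - s)⁻¹ + c * s * (1 - ξ) * (s / (1 - s) ^ 2))) := by
      have := Hf.int_rec Hg
      have heq : (Int.rec (fun n : ℕ => σ ξ (n : ℤ)) (fun n : ℕ => σ ξ (Int.negSucc n)) :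
          ℤ → ℝ) = σ ξ := by
        funext z
        rcases z with m | m <;> rfl
      rwa [heq] at this
    have hs1' : (1 : ℝ) - s ≠ 0 := by linarith
    have : (c * (1 - s)⁻¹ + c * (1 + ξ) * (s / (1 - s) ^ 2) + c)
          + (c * s * (2 - ξ) * (1 - s)⁻¹ + c * s * (1 - ξ) * (s / (1 - s) ^ 2)) = 1 := by
      rw [hceq]
      field_simp
      ring
    rw [this] at Htot
    exact Htot.tsum_eq
  · -- eigenvalue equation
    intro y
    have hsupp : ∑' z : ℤ, σ ξ z * K z y
        = σ ξ (y - 1) * K (y - 1) y + σ ξ (y + 1) * K (y + 1) y := by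
      have hzero : ∀ z : ℤ, z ∉ ({y - 1, y + 1} : Finset ℤ) → σ ξ z * K z y = 0 := by
        intro z hz
        simp only [Finset.mem_insert, Finset.mem_singleton, not_or] at hz
        obtain ⟨h1, h2⟩ := hz
        have hK0 : K z y = 0 := by
          rw [hK]
          split_ifs with c1 c2 c3 c4 c5 c6 c7 <;> first | rfl | (exfalso; omega)
        rw [hK0, mul_zero]
      rw [tsum_eq_sum hzero, Finset.sum_pair (show y - 1 ≠ y + 1 by omega)]
    rw [hsupp]
    obtain ⟨n, rfl | rfl⟩ := Int.eq_nat_or_neg y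
    · rcases n with _ | _ | m
      · -- y = 0
        rw [hσ, hσ, hσ, hK, hK]
        norm_num
        rw [hcdef, hρ']
        try rw [hb']
        have hane : a ≠ 0 := ha0.ne'
        field_simp
        ring
      · -- y = 1
        rw [hσ, hσ, hσ, hK, hK]
        norm_num
        rw [hcdef, hρ']
        try rw [hb']
        have hane : a ≠ 0 := ha0.ne'
        field_simp
        ring
      · -- y = m + 2
        rw [hσ, hσ, hσ, hK, hK]
        have e0 : ((m + 2 : ℕ) : ℤ) ≠ 0 := by omega
        have e1 : ((m + 2 : ℕ) : ℤ) - 1 ≠ 0 := by omega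
        have e2 : ((m + 2 : ℕ) : ℤ) + 1 ≠ 0 := by omega
        rw [if_neg e0, if_neg e1, if_neg e2, if_neg e1, if_neg e2]
        rw [if_pos (show (0:ℤ) < ((m + 2 : ℕ) : ℤ) - 1 by omega)]
        rw [if_pos (show (0:ℤ) < ((m + 2 : ℕ) : ℤ) + 1 by omega)]
        rw [if_pos (show ((m + 2 : ℕ) : ℤ) = ((m + 2 : ℕ) : ℤ) - 1 + 1 by omega)]
        rw [if_neg (show ¬((m + 2 : ℕ) : ℤ) = ((m + 2 : ℕ) : ℤ) + 1 + 1 by omega)]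
        rw [if_pos (show ((m + 2 : ℕ) : ℤ) = ((m + 2 : ℕ) : ℤ) + 1 - 1 by omega)]
        rw [show (((m + 2 : ℕ) : ℤ) - 1).natAbs = m + 1 by omega]
        rw [show (((m + 2 : ℕ) : ℤ) + 1).natAbs = m + 3 by omega]
        rw [show (((m + 2 : ℕ) : ℤ)).natAbs = m + 2 by omega]
        rw [hb', hρ']
        push_cast
        ring
    · rcases n with _ | _ | m
      · -- y = -0 = 0
        simp only [Nat.cast_zero, neg_zero]
        rw [hσ, hσ, hσ, hK, hK]
        norm_num
        rw [hcdef, hρ']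
        try rw [hb']
        have hane : a ≠ 0 := ha0.ne'
        field_simp
        ring
      · -- y = -1
        rw [hσ, hσ, hσ, hK, hK]
        norm_num
        rw [hcdef, hρ']
        try rw [hb']
        have hane : a ≠ 0 := ha0.ne'
        field_simp
        ring
      · -- y = -(m + 2)
        rw [hσ, hσ, hσ, hK, hK]
        have e0 : -((m + 2 : ℕ) : ℤ) ≠ 0 := by omega
        have e1 : -((m + 2 : ℕ) : ℤ) - 1 ≠ 0 := by omega
        have e2 : -((m + 2 : ℕ) : ℤ) + 1 ≠ 0 := by omega
        rw [if_neg e0, if_neg e1, if_neg e2, if_neg e1, if_neg e2]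
        rw [if_neg (show ¬(0:ℤ) < -((m + 2 : ℕ) : ℤ) - 1 by omega)]
        rw [if_neg (show ¬(0:ℤ) < -((m + 2 : ℕ) : ℤ) + 1 by omega)]
        rw [if_neg (show ¬ -((m + 2 : ℕ) : ℤ) = -((m + 2 : ℕ) : ℤ) - 1 - 1 by omega)]
        rw [if_pos (show -((m + 2 : ℕ) : ℤ) = -((m + 2 : ℕ) : ℤ) - 1 + 1 by omega)]
        rw [if_pos (show -((m + 2 : ℕ) : ℤ) = -((m + 2 : ℕ) : ℤ) + 1 - 1 by omega)]
        rw [show (-((m + 2 : ℕ) : ℤ) - 1).natAbs = m + 3 by omega]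
        rw [show (-((m + 2 : ℕ) : ℤ) + 1).natAbs = m + 1 by omega]
        rw [show (-((m + 2 : ℕ) : ℤ)).natAbs = m + 2 by omega]
        rw [hb', hρ']
        push_cast
        ring
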